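/- Fix a prime p, let ℚ_p denote the field of p-adic numbers with p-adic valuation v, let ℤ_p be the ring of p-adic integers, and let μ_n denote the normalized Haar probability measure on the compact group ℤ_p^n. Let n, m, s be natural numbers and let R ⊆ ℚ_p^n × ℚ_p^m × ℚ_p^s be a relation which is a finite Boolean combination of sets of the forms {z : f(z) = 0}, {z : v(f(z)) ≤ v(g(z))}, and {z : ∃ w ∈ ℚ_p, w^k = f(z)}, where f, g range over a finite family of polynomials over ℚ_p and k ≥ 2. Then there is a constant δ > 0 such that for every parameter c ∈ ℚ_p^s there exist measurable sets A ⊆ ℤ_p^n and B ⊆ ℤ_p^m with μ_n(A) ≥ δ and μ_m(B) ≥ δ such that the pair (A, B) is homogeneous for R_c = {(x,y) : (x,y,c) ∈ R}: either A × B ⊆ R_c or (A × B) ∩ R_c = ∅. -/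

import Mathlib

/-- Finite Boolean combinations of a family `S` of subsets of `α`. -/
inductive BoolComb {α : Type*} (S : Set (Set α)) : Set α → Prop
  | basic (s : Set α) (hs : s ∈ S) : BoolComb S s
  | compl (s : Set α) (h : BoolComb S s) : BoolComb S sᶜ
  | inter (s t : Set α) (hs : BoolComb S s) (ht : BoolComb S t) : BoolComb S (s ∩ t)
  | union (s t : Set α) (hs : BoolComb S s) (ht : BoolComb S t) : BoolComb S (s ∪ t)

open MeasureTheory MvPolynomial IsUltrametricDist

variable {p : ℕ} [Fact p.Prime]

lemma pow_diff_norm (x y : ℚ_[p]) (hx : ‖x‖ ≤ 1) (hy : ‖y‖ ≤ 1) (δ : ℝ) (hδ : 0 ≤ δ)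
    (h : ‖x - y‖ ≤ δ) (k : ℕ) : ‖x ^ k - y ^ k‖ ≤ δ := by
  induction k with
  | zero => simpa using hδ
  | succ k ih =>
    have e : x ^ (k+1) - y ^ (k+1) = x ^ k * (x - y) + (x ^ k - y ^ k) * y := by ring
    rw [e]
    refine (norm_add_le_max _ _).trans (max_le ?_ ?_)
    · rw [norm_mul]
      calc ‖x ^ k‖ * ‖x - y‖ ≤ 1 * δ := by
            refine mul_le_mul ?_ h (norm_nonneg _) zero_le_one
            rw [norm_pow]; exact pow_le_one₀ (norm_nonneg _) hx
        _ = δ := one_mul δ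
    · rw [norm_mul]
      calc ‖x ^ k - y ^ k‖ * ‖y‖ ≤ δ * 1 :=
            mul_le_mul ih hy (norm_nonneg _) hδ
        _ = δ := mul_one δ

lemma prod_diff_norm {ι : Type*} (s : Finset ι) (x y : ι → ℚ_[p]) (hx : ∀ i, ‖x i‖ ≤ 1)
    (hy : ∀ i, ‖y i‖ ≤ 1) (δ : ℝ) (hδ : 0 ≤ δ) (h : ∀ i, ‖x i - y i‖ ≤ δ) :
    ‖∏ i ∈ s, x i - ∏ i ∈ s, y i‖ ≤ δ := by
  classical
  induction s using Finset.induction with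
  | empty => simpa using hδ
  | @insert j s hj ih =>
    rw [Finset.prod_insert hj, Finset.prod_insert hj]
    have e : x j * ∏ i ∈ s, x i - y j * ∏ i ∈ s, y i
        = x j * ((∏ i ∈ s, x i) - ∏ i ∈ s, y i) + (x j - y j) * ∏ i ∈ s, y i := by ring
    rw [e]
    refine (norm_add_le_max _ _).trans (max_le ?_ ?_)
    · rw [norm_mul]
      calc ‖x j‖ * ‖(∏ i ∈ s, x i) - ∏ i ∈ s, y i‖ ≤ 1 * δ :=
            mul_le_mul (hx j) ih (norm_nonneg _) zero_le_one
        _ = δ := one_mul δ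
    · rw [norm_mul]
      have hP : ‖∏ i ∈ s, y i‖ ≤ 1 := by
        rw [norm_prod]
        exact Finset.prod_le_one (fun i _ => norm_nonneg _) (fun i _ => hy i)
      calc ‖x j - y j‖ * ‖∏ i ∈ s, y i‖ ≤ δ * 1 :=
            mul_le_mul (h j) hP (norm_nonneg _) hδ
        _ = δ := mul_one δ

/-- Lipschitz bound for polynomial evaluation on the unit polydisk. -/
lemma eval_sub_eval_norm_le {N : ℕ} (f : MvPolynomial (Fin N) ℚ_[p]) (g δ : ℝ)
    (hg : ∀ m, ‖coeff m f‖ ≤ g) (hδ : 0 ≤ δ)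
    (x y : Fin N → ℚ_[p]) (hx : ∀ i, ‖x i‖ ≤ 1) (hy : ∀ i, ‖y i‖ ≤ 1)
    (hxy : ∀ i, ‖x i - y i‖ ≤ δ) :
    ‖eval x f - eval y f‖ ≤ g * δ := by
  have hg0 : 0 ≤ g := (norm_nonneg _).trans (hg 0)
  rw [eval_eq' x f, eval_eq' y f, ← Finset.sum_sub_distrib]
  refine norm_sum_le_of_forall_le_of_nonneg (by positivity) ?_
  intro m hm
  have e : coeff m f * ∏ i, x i ^ m i - coeff m f * ∏ i, y i ^ m i
      = coeff m f * ((∏ i, x i ^ m i) - ∏ i, y i ^ m i) := by ring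
  rw [e, norm_mul]
  refine mul_le_mul (hg m) ?_ (norm_nonneg _) hg0
  refine prod_diff_norm Finset.univ _ _ ?_ ?_ δ hδ ?_
  · intro i; rw [norm_pow]; exact pow_le_one₀ (norm_nonneg _) (hx i)
  · intro i; rw [norm_pow]; exact pow_le_one₀ (norm_nonneg _) (hy i)
  · intro i; exact pow_diff_norm _ _ (hx i) (hy i) δ hδ (hxy i) (m i)

/-- A nonzero multivariate polynomial over `ℚ_[p]` does not vanish identically
on integral points. -/
lemma exists_integral_nonzero : ∀ (N : ℕ) (f : MvPolynomial (Fin N) ℚ_[p]), f ≠ 0 →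
    ∃ a : Fin N → ℤ_[p], eval (fun i => (a i : ℚ_[p])) f ≠ 0 := by
  intro N
  induction N with
  | zero =>
    intro f hf
    refine ⟨fun _ => 0, fun h0 => hf ?_⟩
    have he : ∀ g : MvPolynomial (Fin 0) ℚ_[p],
        g = C (eval (fun i => (((fun _ => (0:ℤ_[p])) i : ℤ_[p]) : ℚ_[p])) g) := by
      intro g
      induction g using MvPolynomial.induction_on with
      | C a => simp
      | add q r hq hr => rw [map_add, C_add]; nth_rewrite 1 [hq, hr]; rfl
      | mul_X q n _ => exact isEmptyElim n
    rw [he f, h0, map_zero]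
  | succ N ih =>
    intro f hf
    set F := MvPolynomial.finSuccEquiv ℚ_[p] N f with hFdef
    have hF : F ≠ 0 := by
      simp only [hFdef, ne_eq, EmbeddingLike.map_eq_zero_iff]
      exact hf
    have hl : F.leadingCoeff ≠ 0 := Polynomial.leadingCoeff_ne_zero.mpr hF
    obtain ⟨a', ha'⟩ := ih _ hl
    set ev := eval (fun i => ((a' i : ℚ_[p]))) with hev
    set q := Polynomial.map ev F with hq
    have hq0 : q ≠ 0 := by
      intro h
      apply ha'
      have : q.coeff F.natDegree = 0 := by rw [h]; simp
      rwa [hq, Polynomial.coeff_map] at this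
    haveI : Infinite ℤ_[p] := Infinite.of_injective (Nat.cast : ℕ → ℤ_[p]) Nat.cast_injective
    have hroots : {x : ℚ_[p] | q.IsRoot x}.Finite := Polynomial.finite_setOf_isRoot hq0
    have : ¬ (Set.range ((↑) : ℤ_[p] → ℚ_[p]) ⊆ {x : ℚ_[p] | q.IsRoot x}) := by
      intro hsub
      have hinj : Function.Injective ((↑) : ℤ_[p] → ℚ_[p]) := fun a b hab => Subtype.coe_injective hab
      exact (Set.infinite_range_of_injective (α := ℤ_[p]) hinj) (hroots.subset hsub)
    obtain ⟨_, ⟨z, rfl⟩, hz⟩ := Set.not_subset.mp this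
    refine ⟨(Fin.cons z a' : Fin (N+1) → ℤ_[p]), ?_⟩
    have hcons : (fun i => (((Fin.cons z a' : Fin (N+1) → ℤ_[p]) i : ℤ_[p]) : ℚ_[p]))
        = Fin.cons ((z : ℚ_[p])) (fun i => ((a' i : ℚ_[p]))) := by
      funext i
      refine Fin.cases ?_ ?_ i <;> intros <;> rfl
    rw [hcons, eval_eq_eval_mv_eval']
    exact hz

/-- monomials with all exponents `≤ d` -/
noncomputable def Md (N d : ℕ) : Finset (Fin N →₀ ℕ) :=
  Finset.Iic (Finsupp.equivFunOnFinite.symm (fun _ => d))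

lemma support_subset_Md {N d : ℕ} (f : MvPolynomial (Fin N) ℚ_[p])
    (hdeg : f.totalDegree ≤ d) : f.support ⊆ Md N d := by
  intro m hm
  rw [Md, Finset.mem_Iic, Finsupp.le_def]
  intro i
  have h1 : m i ≤ m.sum (fun _ e => e) := by
    by_cases hi : i ∈ m.support
    · exact Finset.single_le_sum (fun _ _ => Nat.zero_le _) hi
    · simp [Finsupp.notMem_support_iff.mp hi]
  have h2 : m.sum (fun _ e => e) ≤ d := le_trans (le_totalDegree hm) hdeg
  simpa using le_trans h1 h2

/-- polynomial with coefficient family `v` -/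
noncomputable def Fpoly {N d : ℕ} (v : Md N d → ℚ_[p]) : MvPolynomial (Fin N) ℚ_[p] :=
  ∑ m ∈ (Md N d).attach, monomial (m : Fin N →₀ ℕ) (v m)

lemma coeff_Fpoly {N d : ℕ} (v : Md N d → ℚ_[p]) (m : Fin N →₀ ℕ) :
    coeff m (Fpoly v) = if h : m ∈ Md N d then v ⟨m, h⟩ else 0 := by
  classical
  rw [Fpoly]
  rw [MvPolynomial.coeff_sum]
  by_cases h : m ∈ Md N d
  · rw [dif_pos h]
    rw [Finset.sum_eq_single (⟨m, h⟩ : {x // x ∈ Md N d})]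
    · simp [coeff_monomial]
    · intro b _ hb
      rw [coeff_monomial, if_neg]
      intro hbm
      exact hb (by apply Subtype.ext; exact hbm)
    · intro hmem
      exact absurd (Finset.mem_attach _ _) hmem
  · rw [dif_neg h]
    apply Finset.sum_eq_zero
    intro b _
    rw [coeff_monomial, if_neg]
    intro hbm
    exact h (hbm ▸ b.2)

/-- evaluation of the polynomial with coefficients `v` at an integral point -/
noncomputable def Epoly {N d : ℕ} (a : Fin N → ℤ_[p]) (v : Md N d → ℚ_[p]) : ℚ_[p] :=
  eval (fun i => ((a i : ℚ_[p]))) (Fpoly v)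

lemma Epoly_continuous {N d : ℕ} (a : Fin N → ℤ_[p]) :
    Continuous fun v : Md N d → ℚ_[p] => Epoly a v := by
  have : (fun v : Md N d → ℚ_[p] => Epoly a v)
      = fun v => ∑ m ∈ (Md N d).attach,
          v m * ((m : Fin N →₀ ℕ).prod fun n e => ((a n : ℚ_[p])) ^ e) := by
    funext v
    rw [Epoly, Fpoly, map_sum]
    apply Finset.sum_congr rfl
    intro m _
    rw [eval_monomial]
  rw [this]
  apply continuous_finset_sum
  intro m _
  exact (continuous_apply m).mul continuous_const

lemma Fpoly_eq {N d : ℕ} (f : MvPolynomial (Fin N) ℚ_[p]) (hdeg : f.totalDegree ≤ d)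
    (lam : ℚ_[p]) :
    Fpoly (fun m : Md N d => lam * coeff (m : Fin N →₀ ℕ) f) = C lam * f := by
  apply MvPolynomial.ext
  intro m
  rw [coeff_Fpoly, coeff_C_mul]
  by_cases h : m ∈ Md N d
  · rw [dif_pos h]
  · rw [dif_neg h]
    have : coeff m f = 0 := by
      by_contra hc
      exact h (support_subset_Md f hdeg (MvPolynomial.mem_support_iff.mpr hc))
    rw [this, mul_zero]

lemma unitBall_compact : IsCompact {x : ℚ_[p] | ‖x‖ ≤ 1} := by
  have : {x : ℚ_[p] | ‖x‖ ≤ 1} = Metric.closedBall 0 1 := by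
    ext x; simp [Metric.mem_closedBall, dist_eq_norm]
  rw [this]
  exact isCompact_closedBall 0 1

lemma key (N d t : ℕ) :
    ∃ ε : ℝ, 0 < ε ∧ ∀ f : Fin t → MvPolynomial (Fin N) ℚ_[p],
      (∀ j, f j ≠ 0) → (∀ j, (f j).totalDegree ≤ d) →
      ∃ a : Fin N → ℤ_[p],
        ∀ j m, ε * ‖coeff m (f j)‖ ≤ ‖eval (fun i => ((a i : ℚ_[p]))) (f j)‖ := by
  classical
  rcases Nat.eq_zero_or_pos t with rfl | ht
  · exact ⟨1, one_pos, fun f _ _ => ⟨fun _ => 0, fun j => j.elim0⟩⟩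
  haveI : NeZero t := ⟨ht.ne'⟩
  set K : Set (Fin t → Md N d → ℚ_[p]) :=
    {c | (∀ j mm, ‖c j mm‖ ≤ 1) ∧ ∀ j, ∃ mm, ‖c j mm‖ = 1} with hK
  have hP : IsCompact {c : Fin t → Md N d → ℚ_[p] | ∀ j mm, ‖c j mm‖ ≤ 1} := by
    have he : {c : Fin t → Md N d → ℚ_[p] | ∀ j mm, ‖c j mm‖ ≤ 1}
        = Set.pi Set.univ (fun _ : Fin t => Set.pi Set.univ
            (fun _ : Md N d => {x : ℚ_[p] | ‖x‖ ≤ 1})) := by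
      ext c; simp [Set.mem_pi]
    rw [he]
    exact isCompact_univ_pi (fun j => isCompact_univ_pi (fun mm => unitBall_compact))
  have hQ : IsClosed {c : Fin t → Md N d → ℚ_[p] | ∀ j, ∃ mm, ‖c j mm‖ = 1} := by
    have he : {c : Fin t → Md N d → ℚ_[p] | ∀ j, ∃ mm, ‖c j mm‖ = 1}
        = ⋂ j, ⋃ mm, {c : Fin t → Md N d → ℚ_[p] | ‖c j mm‖ = 1} := by
      ext c; simp
    rw [he]
    refine isClosed_iInter (fun j => isClosed_iUnion_of_finite (fun mm => ?_))
    exact isClosed_eq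
      (continuous_norm.comp ((continuous_apply mm).comp (continuous_apply j)))
      continuous_const
  have hKcompact : IsCompact K := by
    have he : K = {c : Fin t → Md N d → ℚ_[p] | ∀ j mm, ‖c j mm‖ ≤ 1}
        ∩ {c | ∀ j, ∃ mm, ‖c j mm‖ = 1} := rfl
    rw [he]; exact hP.inter_right hQ
  have hgood : ∀ c ∈ K, ∃ (a : Fin N → ℤ_[p]) (r : ℝ),
      0 < r ∧ ∀ j, r < ‖Epoly a (c j)‖ := by
    intro c hc
    have hFne : ∀ j, Fpoly (c j) ≠ 0 := by
      intro j h0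
      obtain ⟨mm, hmm⟩ := hc.2 j
      have hcf : coeff (mm : Fin N →₀ ℕ) (Fpoly (c j)) = c j mm := by
        rw [coeff_Fpoly, dif_pos mm.2]
      rw [h0, coeff_zero] at hcf
      rw [← hcf] at hmm
      simp at hmm
    have hG : (∏ j, Fpoly (c j)) ≠ 0 := Finset.prod_ne_zero_iff.mpr (fun j _ => hFne j)
    obtain ⟨a, ha⟩ := exists_integral_nonzero N _ hG
    have haj : ∀ j, Epoly a (c j) ≠ 0 := by
      rw [map_prod] at ha
      intro j h0
      exact ha (Finset.prod_eq_zero (Finset.mem_univ j) h0)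
    have hinfpos : 0 < Finset.univ.inf' Finset.univ_nonempty
        (fun j => ‖Epoly a (c j)‖) := by
      rw [Finset.lt_inf'_iff]
      exact fun j _ => norm_pos_iff.mpr (haj j)
    refine ⟨a, (Finset.univ.inf' Finset.univ_nonempty fun j => ‖Epoly a (c j)‖) / 2,
      div_pos hinfpos two_pos, ?_⟩
    intro j
    have h1 : Finset.univ.inf' Finset.univ_nonempty (fun j => ‖Epoly a (c j)‖)
        ≤ ‖Epoly a (c j)‖ := Finset.inf'_le _ (Finset.mem_univ j)
    linarith
  choose! ac rc hrpos hrlt using hgood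
  set U : (Fin t → Md N d → ℚ_[p]) → Set (Fin t → Md N d → ℚ_[p]) :=
    fun c₀ => {c | ∀ j, rc c₀ < ‖Epoly (ac c₀) (c j)‖} with hU
  have hUopen : ∀ c₀, IsOpen (U c₀) := by
    intro c₀
    have he : U c₀ = ⋂ j, (fun c : Fin t → Md N d → ℚ_[p] =>
        ‖Epoly (ac c₀) (c j)‖) ⁻¹' Set.Ioi (rc c₀) := by
      ext cc; simp [hU, Set.mem_iInter]
    rw [he]
    refine isOpen_iInter_of_finite fun j => ?_
    exact ((continuous_norm.comp ((Epoly_continuous (ac c₀)).comp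
      (continuous_apply j)))).isOpen_preimage _ isOpen_Ioi
  have hcover : K ⊆ ⋃ c₀ ∈ K, U c₀ := fun c hc => Set.mem_biUnion hc (hrlt c hc)
  obtain ⟨b, hbK, hbfin, hbcover⟩ :=
    hKcompact.elim_finite_subcover_image (fun c₀ _ => hUopen c₀) hcover
  have hKne : K.Nonempty := by
    refine ⟨fun j mm => if (mm : Fin N →₀ ℕ) = 0 then 1 else 0, ⟨?_, ?_⟩⟩
    · intro j mm; dsimp only; split <;> simp
    · intro j
      refine ⟨⟨0, ?_⟩, by simp⟩
      rw [Md, Finset.mem_Iic]; exact zero_le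
  obtain ⟨c₁, hc₁⟩ := hKne
  have hb_ne : b.Nonempty := by
    rcases Set.mem_iUnion₂.mp (hbcover hc₁) with ⟨c₀, hc₀b, _⟩
    exact ⟨c₀, hc₀b⟩
  have hbf_ne : hbfin.toFinset.Nonempty := by
    rwa [Set.Finite.toFinset_nonempty]
  set ε := hbfin.toFinset.inf' hbf_ne rc with hε
  have hεpos : 0 < ε := by
    rw [hε, Finset.lt_inf'_iff]
    intro c₀ hc₀
    exact hrpos c₀ (hbK (hbfin.mem_toFinset.mp hc₀))
  refine ⟨ε, hεpos, ?_⟩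
  intro f hf0 hfdeg
  have hsupne : ∀ j, (f j).support.Nonempty :=
    fun j => MvPolynomial.support_nonempty.mpr (hf0 j)
  have hmax : ∀ j, ∃ ms ∈ (f j).support, ∀ m' ∈ (f j).support,
      ‖coeff m' (f j)‖ ≤ ‖coeff ms (f j)‖ :=
    fun j => Finset.exists_max_image _ _ (hsupne j)
  choose mstar hmstar hmaxle using hmax
  set lam := fun j => coeff (mstar j) (f j) with hlam
  have hlamne : ∀ j, lam j ≠ 0 := fun j => MvPolynomial.mem_support_iff.mp (hmstar j)
  have hlampos : ∀ j, 0 < ‖lam j‖ := fun j => norm_pos_iff.mpr (hlamne j)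
  have hcoefle : ∀ j m, ‖coeff m (f j)‖ ≤ ‖lam j‖ := by
    intro j m
    by_cases hm : m ∈ (f j).support
    · exact hmaxle j m hm
    · rw [MvPolynomial.notMem_support_iff.mp hm]
      simp [norm_nonneg]
  set c := fun j (mm : Md N d) => (lam j)⁻¹ * coeff (mm : Fin N →₀ ℕ) (f j) with hc
  have hcK : c ∈ K := by
    constructor
    · intro j mm
      rw [hc]; dsimp only
      rw [norm_mul, norm_inv]
      calc ‖lam j‖⁻¹ * ‖coeff (mm : Fin N →₀ ℕ) (f j)‖
          ≤ ‖lam j‖⁻¹ * ‖lam j‖ :=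
            mul_le_mul_of_nonneg_left (hcoefle j _) (by positivity)
        _ = 1 := inv_mul_cancel₀ (hlampos j).ne'
    · intro j
      have hmem : mstar j ∈ Md N d := support_subset_Md (f j) (hfdeg j) (hmstar j)
      refine ⟨⟨mstar j, hmem⟩, ?_⟩
      rw [hc]; dsimp only
      rw [norm_mul, norm_inv]
      exact inv_mul_cancel₀ (hlampos j).ne'
  obtain ⟨c₀, hc₀b, hcU⟩ := Set.mem_iUnion₂.mp (hbcover hcK)
  refine ⟨ac c₀, ?_⟩
  intro j m
  have hE : Epoly (ac c₀) (c j) = (lam j)⁻¹ * eval (fun i => ((ac c₀ i : ℚ_[p]))) (f j) := by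
    rw [Epoly, hc]
    rw [Fpoly_eq (f j) (hfdeg j) ((lam j)⁻¹)]
    rw [map_mul, eval_C]
  have h1 : rc c₀ < ‖Epoly (ac c₀) (c j)‖ := hcU j
  have hc₀K : c₀ ∈ K := hbK hc₀b
  have hεle : ε ≤ rc c₀ := Finset.inf'_le _ (hbfin.mem_toFinset.mpr hc₀b)
  have h2 : ‖eval (fun i => ((ac c₀ i : ℚ_[p]))) (f j)‖ = ‖lam j‖ * ‖Epoly (ac c₀) (c j)‖ := by
    rw [hE, norm_mul, norm_inv, ← mul_assoc, mul_inv_cancel₀ (hlampos j).ne', one_mul]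
  calc ε * ‖coeff m (f j)‖ ≤ rc c₀ * ‖lam j‖ :=
        mul_le_mul hεle (hcoefle j m) (norm_nonneg _) (hrpos c₀ hc₀K).le
    _ ≤ ‖lam j‖ * ‖Epoly (ac c₀) (c j)‖ := by
        rw [mul_comm]
        exact mul_le_mul_of_nonneg_left h1.le (norm_nonneg _)
    _ = ‖eval (fun i => ((ac c₀ i : ℚ_[p]))) (f j)‖ := h2.symm

lemma norm_eq_of_sub_lt {x y : ℚ_[p]} (h : ‖x - y‖ < ‖y‖) : ‖x‖ = ‖y‖ := by
  have h1 : ‖x‖ ≤ ‖y‖ := by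
    calc ‖x‖ = ‖(x - y) + y‖ := by ring_nf
      _ ≤ max ‖x - y‖ ‖y‖ := norm_add_le_max _ _
      _ ≤ ‖y‖ := max_le h.le le_rfl
  refine le_antisymm h1 (le_of_not_gt fun hlt => ?_)
  have h2 : ‖y‖ ≤ max ‖x‖ ‖x - y‖ := by
    calc ‖y‖ = ‖x + -(x - y)‖ := by ring_nf
      _ ≤ max ‖x‖ ‖-(x - y)‖ := norm_add_le_max _ _
      _ = max ‖x‖ ‖x - y‖ := by rw [norm_neg]
  exact absurd h2 (not_le.mpr (max_lt hlt h))

lemma norm_natCast_ge (k K : ℕ) (hk : 1 ≤ k) (hkK : k ≤ K) :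
    ((K:ℝ))⁻¹ ≤ ‖(k : ℚ_[p])‖ := by
  have hk0 : (k : ℚ_[p]) ≠ 0 := Nat.cast_ne_zero.mpr (by omega)
  rw [Padic.norm_eq_zpow_neg_valuation hk0, Padic.valuation_natCast]
  have hdvd : p ^ padicValNat p k ∣ k := pow_padicValNat_dvd
  have hle : (p:ℝ) ^ (padicValNat p k) ≤ (K:ℝ) := by
    have h1 := Nat.le_of_dvd (by omega) hdvd
    exact_mod_cast le_trans h1 hkK
  have hppos : (0:ℝ) < (p:ℝ) ^ (padicValNat p k) := by
    have hp1 : (1:ℝ) < p := by exact_mod_cast (Fact.out : p.Prime).one_lt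
    positivity
  rw [zpow_neg, zpow_natCast]
  exact inv_anti₀ hppos hle

lemma exists_pow_eq_of_close (k K : ℕ) (hk1 : 1 ≤ k) (hkK : k ≤ K)
    (u : ℚ_[p]) (hu : ‖u - 1‖ < ((K:ℝ)⁻¹)^2) : ∃ w : ℚ_[p], w ^ k = u := by
  have hK1 : 1 ≤ K := le_trans hk1 hkK
  have hle1 : ((K:ℝ)⁻¹)^2 ≤ 1 := by
    have h1 : (1:ℝ) ≤ K := by exact_mod_cast hK1
    have h2 : (K:ℝ)⁻¹ ≤ 1 := by rw [inv_le_one_iff₀]; right; exact h1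
    calc ((K:ℝ)⁻¹)^2 ≤ 1^2 := pow_le_pow_left₀ (by positivity) h2 2
      _ = 1 := one_pow 2
  have hnorm1 : ‖u‖ = 1 := by
    have h := norm_eq_of_sub_lt (x := u) (y := 1)
    simp only [norm_one] at h
    exact h (lt_of_lt_of_le hu hle1)
  set u' : ℤ_[p] := ⟨u, hnorm1.le⟩ with hu'
  set F : Polynomial ℤ_[p] := Polynomial.X ^ k - Polynomial.C u' with hF
  have heval : F.eval 1 = 1 - u' := by simp [hF]
  have hdeval : ‖F.derivative.eval 1‖ = ‖(k : ℤ_[p])‖ := by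
    rw [hF]
    simp [Polynomial.derivative_X_pow]
  have hnormk : ((K:ℝ))⁻¹ ≤ ‖(k:ℤ_[p])‖ := by
    rw [PadicInt.norm_def]
    have e : ((k : ℤ_[p]) : ℚ_[p]) = (k : ℚ_[p]) := by push_cast; rfl
    rw [e]
    exact norm_natCast_ge k K hk1 hkK
  have hlt : ‖F.eval 1‖ < ‖F.derivative.eval 1‖^2 := by
    rw [heval, hdeval]
    have h1 : ‖(1 - u' : ℤ_[p])‖ = ‖u - 1‖ := by
      rw [PadicInt.norm_def, PadicInt.coe_sub, PadicInt.coe_one]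
      have e : (u' : ℚ_[p]) = u := rfl
      rw [e, norm_sub_rev]
    rw [h1]
    calc ‖u - 1‖ < ((K:ℝ)⁻¹)^2 := hu
      _ ≤ ‖(k:ℤ_[p])‖^2 := pow_le_pow_left₀ (by positivity) hnormk 2
  obtain ⟨z, hz, _, _, _⟩ := hensels_lemma hlt
  have hzk : z ^ k = u' := by
    rw [hF] at hz
    simp only [Polynomial.coe_aeval_eq_eval, Polynomial.eval_sub, Polynomial.eval_pow, Polynomial.eval_X,
      Polynomial.eval_C] at hz
    exact sub_eq_zero.mp hz
  refine ⟨(z : ℚ_[p]), ?_⟩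
  have := congrArg (fun t : ℤ_[p] => (t : ℚ_[p])) hzk
  simpa using this

lemma pow_iff_of_close (k K : ℕ) (h2k : 2 ≤ k) (hkK : k ≤ K) {x y : ℚ_[p]} (hy : y ≠ 0)
    (hxy : ‖x - y‖ < ((K:ℝ)⁻¹)^2 * ‖y‖) :
    (∃ w : ℚ_[p], w ^ k = x) ↔ (∃ w : ℚ_[p], w ^ k = y) := by
  have hk1 : 1 ≤ k := by omega
  have hK1 : 1 ≤ K := le_trans hk1 hkK
  have hle1 : ((K:ℝ)⁻¹)^2 ≤ 1 := by
    have h1 : (1:ℝ) ≤ K := by exact_mod_cast hK1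
    have h2 : (K:ℝ)⁻¹ ≤ 1 := by rw [inv_le_one_iff₀]; right; exact h1
    calc ((K:ℝ)⁻¹)^2 ≤ 1^2 := pow_le_pow_left₀ (by positivity) h2 2
      _ = 1 := one_pow 2
  have hypos : 0 < ‖y‖ := norm_pos_iff.mpr hy
  have hxy1 : ‖x - y‖ < ‖y‖ := lt_of_lt_of_le hxy (by nlinarith)
  have hx0 : ‖x‖ = ‖y‖ := norm_eq_of_sub_lt hxy1
  have hx : x ≠ 0 := by
    rw [← norm_pos_iff, hx0]; exact hypos
  set u := x / y with hudef
  have hu0 : u ≠ 0 := div_ne_zero hx hy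
  have hun : ‖u‖ = 1 := by rw [hudef, norm_div, hx0, div_self hypos.ne']
  have hu : ‖u - 1‖ < ((K:ℝ)⁻¹)^2 := by
    have e : u - 1 = (x - y)/y := by rw [hudef, div_sub_one hy]
    rw [e, norm_div, div_lt_iff₀ hypos]
    exact hxy
  have hu' : ‖u⁻¹ - 1‖ < ((K:ℝ)⁻¹)^2 := by
    have e : u⁻¹ - 1 = (1 - u) * u⁻¹ := by field_simp
    rw [e, norm_mul, norm_inv, hun, inv_one, mul_one, norm_sub_rev]
    exact hu
  constructor
  · rintro ⟨w, rfl⟩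
    obtain ⟨v, hv⟩ := exists_pow_eq_of_close k K hk1 hkK u⁻¹ hu'
    refine ⟨w * v, ?_⟩
    rw [mul_pow, hv, hudef]
    field_simp
  · rintro ⟨w, rfl⟩
    obtain ⟨v, hv⟩ := exists_pow_eq_of_close k K hk1 hkK u hu
    refine ⟨w * v, ?_⟩
    rw [mul_pow, hv, hudef]
    field_simp

lemma valuation_eq_of_norm_eq {x y : ℚ_[p]} (hx : x ≠ 0) (hy : y ≠ 0) (h : ‖x‖ = ‖y‖) :
    x.valuation = y.valuation := by
  rw [Padic.norm_eq_zpow_neg_valuation hx, Padic.norm_eq_zpow_neg_valuation hy] at h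
  have hp1 : (1:ℝ) < p := by exact_mod_cast (Fact.out : p.Prime).one_lt
  have := zpow_right_injective₀ (by linarith : (0:ℝ) < p) (by linarith) h
  omega

lemma addValuation_eq_of_norm_eq {x y : ℚ_[p]} (hx : x ≠ 0) (hy : y ≠ 0) (h : ‖x‖ = ‖y‖) :
    Padic.addValuation x = Padic.addValuation y := by
  rw [Padic.addValuation.apply hx, Padic.addValuation.apply hy,
    valuation_eq_of_norm_eq hx hy h]

lemma addValuation_zero' : Padic.addValuation (0 : ℚ_[p]) = ⊤ :=
  Padic.addValuation.map_zero

lemma addValuation_ne_top {x : ℚ_[p]} (hx : x ≠ 0) : Padic.addValuation x ≠ ⊤ := by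
  rw [Padic.addValuation.apply hx]
  exact WithTop.coe_ne_top

lemma ball_measurable (n R : ℕ) [MeasurableSpace (Fin n → ℤ_[p])]
    [BorelSpace (Fin n → ℤ_[p])] (a : Fin n → ℤ_[p]) :
    MeasurableSet {x : Fin n → ℤ_[p] | ∀ i, ‖x i - a i‖ ≤ ((p:ℝ))^(-(R:ℤ))} := by
  have hcl : IsClosed {x : Fin n → ℤ_[p] | ∀ i, ‖x i - a i‖ ≤ ((p:ℝ))^(-(R:ℤ))} := by
    have he : {x : Fin n → ℤ_[p] | ∀ i, ‖x i - a i‖ ≤ ((p:ℝ))^(-(R:ℤ))}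
        = ⋂ i, {x : Fin n → ℤ_[p] | ‖x i - a i‖ ≤ ((p:ℝ))^(-(R:ℤ))} := by
      ext x; simp
    rw [he]
    refine isClosed_iInter fun i => ?_
    exact isClosed_le (continuous_norm.comp ((continuous_apply i).sub continuous_const))
      continuous_const
  exact hcl.measurableSet

lemma measure_ball_eq (n R : ℕ) [MeasurableSpace (Fin n → ℤ_[p])]
    [BorelSpace (Fin n → ℤ_[p])]
    (μ : Measure (Fin n → ℤ_[p])) [μ.IsAddHaarMeasure] [IsProbabilityMeasure μ]
    (a : Fin n → ℤ_[p]) :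
    μ {x : Fin n → ℤ_[p] | ∀ i, ‖x i - a i‖ ≤ ((p:ℝ))^(-(R:ℤ))}
      = ((p : ENNReal)^(R*n))⁻¹ := by
  classical
  set r : ℝ := ((p:ℝ))^(-(R:ℤ)) with hr
  set H : Set (Fin n → ℤ_[p]) := {x | ∀ i, ‖x i‖ ≤ r} with hH
  have htrans : ∀ b : Fin n → ℤ_[p],
      μ {x : Fin n → ℤ_[p] | ∀ i, ‖x i - b i‖ ≤ r} = μ H := by
    intro b
    have he : {x : Fin n → ℤ_[p] | ∀ i, ‖x i - b i‖ ≤ r}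
        = (fun x => -b + x) ⁻¹' H := by
      ext x
      simp only [Set.mem_preimage, hH, Set.mem_setOf_eq, Pi.add_apply, Pi.neg_apply]
      refine forall_congr' fun i => ?_
      rw [neg_add_eq_sub]
    rw [he, measure_preimage_add]
  -- coset decomposition
  haveI hpR : NeZero (p^R) := ⟨(pow_pos (Fact.out : p.Prime).pos R).ne'⟩
  set C : (Fin n → Fin (p^R)) → Set (Fin n → ℤ_[p]) :=
    fun v => {x | ∀ i, ‖x i - (((v i : ℕ) : ℤ_[p]))‖ ≤ r} with hC
  have hmem_iff : ∀ (z w : ℤ_[p]), ‖z - w‖ ≤ r ↔ PadicInt.toZModPow R z = PadicInt.toZModPow R w := by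
    intro z w
    rw [hr, PadicInt.norm_le_pow_iff_mem_span_pow]
    rw [← PadicInt.ker_toZModPow, RingHom.mem_ker, map_sub, sub_eq_zero]
  have hcover : (Set.univ : Set (Fin n → ℤ_[p])) ⊆ ⋃ v, C v := by
    intro x _
    refine Set.mem_iUnion.mpr ⟨fun i => ⟨(x i).appr R, PadicInt.appr_lt _ _⟩, ?_⟩
    intro i
    rw [hr, PadicInt.norm_le_pow_iff_mem_span_pow]
    exact PadicInt.appr_spec R (x i)
  have hdisj : Pairwise (Function.onFun Disjoint C) := by
    intro v w hvw
    rw [Function.onFun, Set.disjoint_left]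
    intro x hxv hxw
    apply hvw
    funext i
    have h1 := (hmem_iff (x i) _).mp (hxv i)
    have h2 := (hmem_iff (x i) _).mp (hxw i)
    have h3 : ((((v i : ℕ)) : ZMod (p^R))) = (((w i : ℕ)) : ZMod (p^R)) := by
      have e1 : PadicInt.toZModPow R (((v i : ℕ) : ℤ_[p])) = (((v i : ℕ)) : ZMod (p^R)) :=
        map_natCast _ _
      have e2 : PadicInt.toZModPow R (((w i : ℕ) : ℤ_[p])) = (((w i : ℕ)) : ZMod (p^R)) :=
        map_natCast _ _
      rw [← e1, ← e2, ← h1, ← h2]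
    have h4 : (v i : ℕ) = (w i : ℕ) := by
      have hv' := ZMod.val_cast_of_lt (show (v i : ℕ) < p^R from (v i).2)
      have hw' := ZMod.val_cast_of_lt (show (w i : ℕ) < p^R from (w i).2)
      rw [← hv', ← hw', h3]
    exact Fin.ext h4
  have hCmeas : ∀ v, MeasurableSet (C v) := fun v => ball_measurable n R _
  have hsum : μ (⋃ v, C v) = ∑' v, μ (C v) := measure_iUnion hdisj hCmeas
  have huniv : μ (⋃ v, C v) = 1 := by
    rw [Set.eq_univ_of_univ_subset hcover]
    exact measure_univ
  have hCv : ∀ v, μ (C v) = μ H := fun v => htrans _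
  have hcard : (∑' v : Fin n → Fin (p^R), μ (C v)) = (p : ENNReal)^(R*n) * μ H := by
    rw [tsum_fintype]
    rw [Finset.sum_congr rfl (fun v _ => hCv v), Finset.sum_const, Finset.card_univ]
    rw [Fintype.card_fun]
    simp only [Fintype.card_fin, nsmul_eq_mul]
    congr 1
    rw [← pow_mul]
    push_cast
    ring
  have hone : (p : ENNReal)^(R*n) * μ H = 1 := by
    rw [← hcard, ← hsum, huniv]
  have hpne : ((p : ENNReal)^(R*n)) ≠ 0 := by
    apply pow_ne_zero
    exact_mod_cast (Fact.out : p.Prime).ne_zero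
  have hptop : ((p : ENNReal)^(R*n)) ≠ ⊤ := by
    apply ENNReal.pow_ne_top
    exact ENNReal.natCast_ne_top p
  have hμH : μ H = ((p : ENNReal)^(R*n))⁻¹ := by
    have := congrArg (fun t => ((p : ENNReal)^(R*n))⁻¹ * t) hone
    simp only [mul_one] at this
    rw [← mul_assoc, ENNReal.inv_mul_cancel hpne hptop, one_mul] at this
    exact this
  rw [htrans a, hμH]

/-- evaluation of a polynomial at a triple point -/
noncomputable def EV {n m s : ℕ} (f : MvPolynomial (Fin n ⊕ Fin m ⊕ Fin s) ℚ_[p])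
    (z : (Fin n → ℚ_[p]) × (Fin m → ℚ_[p]) × (Fin s → ℚ_[p])) : ℚ_[p] :=
  MvPolynomial.eval (Sum.elim z.1 (Sum.elim z.2.1 z.2.2)) f

lemma boolcomb_data {n m s : ℕ}
    (R : Set ((Fin n → ℚ_[p]) × (Fin m → ℚ_[p]) × (Fin s → ℚ_[p])))
    (hR : BoolComb
      {S | ∃ f g : MvPolynomial (Fin n ⊕ Fin m ⊕ Fin s) ℚ_[p],
        S = {z | MvPolynomial.eval (Sum.elim z.1 (Sum.elim z.2.1 z.2.2)) f = 0} ∨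
        S = {z | Padic.addValuation (MvPolynomial.eval (Sum.elim z.1 (Sum.elim z.2.1 z.2.2)) f)
                  ≤ Padic.addValuation
                      (MvPolynomial.eval (Sum.elim z.1 (Sum.elim z.2.1 z.2.2)) g)} ∨
        ∃ k : ℕ, 2 ≤ k ∧
          S = {z | ∃ w : ℚ_[p],
            w ^ k = MvPolynomial.eval (Sum.elim z.1 (Sum.elim z.2.1 z.2.2)) f}} R) :
    ∃ (L : List (MvPolynomial (Fin n ⊕ Fin m ⊕ Fin s) ℚ_[p])) (K : ℕ), 2 ≤ K ∧
      ∀ z z' : (Fin n → ℚ_[p]) × (Fin m → ℚ_[p]) × (Fin s → ℚ_[p]),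
        (∀ f ∈ L, (EV f z = 0 ↔ EV f z' = 0)) →
        (∀ f ∈ L, ∀ g ∈ L,
          (Padic.addValuation (EV f z) ≤ Padic.addValuation (EV g z) ↔
            Padic.addValuation (EV f z') ≤ Padic.addValuation (EV g z'))) →
        (∀ f ∈ L, ∀ k : ℕ, 2 ≤ k → k ≤ K →
          ((∃ w : ℚ_[p], w ^ k = EV f z) ↔ (∃ w : ℚ_[p], w ^ k = EV f z'))) →
        (z ∈ R ↔ z' ∈ R) := by
  induction hR with
  | basic S hS =>
    obtain ⟨f, g, hfg⟩ := hS
    rcases hfg with h | h | ⟨k, hk2, h⟩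
    · refine ⟨[f], 2, le_rfl, fun z z' h1 _ _ => ?_⟩
      subst h
      simpa [EV] using h1 f (List.mem_singleton_self f)
    · refine ⟨[f, g], 2, le_rfl, fun z z' _ h2 _ => ?_⟩
      subst h
      simpa [EV] using h2 f (by simp) g (by simp)
    · refine ⟨[f], k, hk2, fun z z' _ _ h3 => ?_⟩
      subst h
      simpa [EV] using h3 f (List.mem_singleton_self f) k hk2 le_rfl
  | compl S hS ih =>
    obtain ⟨L, K, hK2, hdet⟩ := ih
    exact ⟨L, K, hK2, fun z z' h1 h2 h3 => not_congr (hdet z z' h1 h2 h3)⟩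
  | inter S T hS hT ihS ihT =>
    obtain ⟨L1, K1, hK1, hdet1⟩ := ihS
    obtain ⟨L2, K2, hK2, hdet2⟩ := ihT
    refine ⟨L1 ++ L2, max K1 K2, le_trans hK1 (le_max_left _ _), fun z z' h1 h2 h3 => ?_⟩
    have e1 := hdet1 z z' (fun f hf => h1 f (List.mem_append_left _ hf))
      (fun f hf g hg => h2 f (List.mem_append_left _ hf) g (List.mem_append_left _ hg))
      (fun f hf k hk hkK => h3 f (List.mem_append_left _ hf) k hk
        (le_trans hkK (le_max_left _ _)))
    have e2 := hdet2 z z' (fun f hf => h1 f (List.mem_append_right _ hf))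
      (fun f hf g hg => h2 f (List.mem_append_right _ hf) g (List.mem_append_right _ hg))
      (fun f hf k hk hkK => h3 f (List.mem_append_right _ hf) k hk
        (le_trans hkK (le_max_right _ _)))
    exact and_congr e1 e2
  | union S T hS hT ihS ihT =>
    obtain ⟨L1, K1, hK1, hdet1⟩ := ihS
    obtain ⟨L2, K2, hK2, hdet2⟩ := ihT
    refine ⟨L1 ++ L2, max K1 K2, le_trans hK1 (le_max_left _ _), fun z z' h1 h2 h3 => ?_⟩
    have e1 := hdet1 z z' (fun f hf => h1 f (List.mem_append_left _ hf))
      (fun f hf g hg => h2 f (List.mem_append_left _ hf) g (List.mem_append_left _ hg))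
      (fun f hf k hk hkK => h3 f (List.mem_append_left _ hf) k hk
        (le_trans hkK (le_max_left _ _)))
    have e2 := hdet2 z z' (fun f hf => h1 f (List.mem_append_right _ hf))
      (fun f hf g hg => h2 f (List.mem_append_right _ hf) g (List.mem_append_right _ hg))
      (fun f hf k hk hkK => h3 f (List.mem_append_right _ hf) k hk
        (le_trans hkK (le_max_right _ _)))
    exact or_congr e1 e2

/-- substitution of the parameter variables -/
noncomputable def substC {n m s : ℕ} (c : Fin s → ℚ_[p]) :
    MvPolynomial (Fin n ⊕ Fin m ⊕ Fin s) ℚ_[p] →ₐ[ℚ_[p]] MvPolynomial (Fin n ⊕ Fin m) ℚ_[p] :=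
  aeval (Sum.elim (fun i => X (Sum.inl i))
    (Sum.elim (fun i => X (Sum.inr i)) (fun i => C (c i))))

lemma eval_substC {n m s : ℕ} (c : Fin s → ℚ_[p])
    (f : MvPolynomial (Fin n ⊕ Fin m ⊕ Fin s) ℚ_[p]) (x : Fin n → ℚ_[p]) (y : Fin m → ℚ_[p]) :
    eval (Sum.elim x y) (substC c f) = eval (Sum.elim x (Sum.elim y c)) f := by
  induction f using MvPolynomial.induction_on with
  | C a => simp [substC]
  | add f g hf hg => rw [map_add, map_add, map_add, hf, hg]
  | mul_X f i hf =>
    rw [map_mul, map_mul, map_mul, hf]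
    congr 1
    rcases i with i | i
    · simp [substC]
    · rcases i with j | j <;> simp [substC]

lemma totalDegree_aeval_le {σ τ : Type*} [Fintype σ] [Fintype τ]
    (g : σ → MvPolynomial τ ℚ_[p]) (hg : ∀ i, (g i).totalDegree ≤ 1)
    (f : MvPolynomial σ ℚ_[p]) :
    (aeval (R := ℚ_[p]) g f).totalDegree ≤ f.totalDegree := by
  classical
  rw [aeval_def, eval₂_eq]
  refine le_trans (totalDegree_finset_sum _ _) ?_
  rw [Finset.sup_le_iff]
  intro d hd
  refine le_trans (totalDegree_mul _ _) ?_
  have h1 : (algebraMap ℚ_[p] (MvPolynomial τ ℚ_[p]) (coeff d f)).totalDegree = 0 := by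
    rw [MvPolynomial.algebraMap_eq]
    exact totalDegree_C _
  rw [h1, zero_add]
  refine le_trans (totalDegree_finset_prod _ _) ?_
  calc ∑ i ∈ d.support, (g i ^ d i).totalDegree
      ≤ ∑ i ∈ d.support, d i * (g i).totalDegree :=
        Finset.sum_le_sum (fun i _ => totalDegree_pow _ _)
    _ ≤ ∑ i ∈ d.support, d i * 1 :=
        Finset.sum_le_sum (fun i _ => Nat.mul_le_mul_left _ (hg i))
    _ = ∑ i ∈ d.support, d i := by simp
    _ ≤ f.totalDegree := le_totalDegree hd

/-- Homogeneous pairs of definite Haar measure in `ℤ_p^n × ℤ_p^m` for parametrized relations on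
`ℚ_p^n × ℚ_p^m × ℚ_p^s` that are Boolean combinations of polynomial equalities, valuation
comparisons, and `k`-th power conditions.  Here `μn` and `μm` are the normalized (probability)
Haar measures on the compact groups `ℤ_p^n` and `ℤ_p^m`. -/
theorem stmt_15 (p : ℕ) [Fact p.Prime] (n m s : ℕ)
    [MeasurableSpace (Fin n → ℤ_[p])] [BorelSpace (Fin n → ℤ_[p])]
    [MeasurableSpace (Fin m → ℤ_[p])] [BorelSpace (Fin m → ℤ_[p])]
    (μn : Measure (Fin n → ℤ_[p])) [μn.IsAddHaarMeasure] [IsProbabilityMeasure μn]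
    (μm : Measure (Fin m → ℤ_[p])) [μm.IsAddHaarMeasure] [IsProbabilityMeasure μm]
    (R : Set ((Fin n → ℚ_[p]) × (Fin m → ℚ_[p]) × (Fin s → ℚ_[p])))
    (hR : BoolComb
      {S | ∃ f g : MvPolynomial (Fin n ⊕ Fin m ⊕ Fin s) ℚ_[p],
        S = {z | MvPolynomial.eval (Sum.elim z.1 (Sum.elim z.2.1 z.2.2)) f = 0} ∨
        S = {z | Padic.addValuation (MvPolynomial.eval (Sum.elim z.1 (Sum.elim z.2.1 z.2.2)) f)
                  ≤ Padic.addValuation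
                      (MvPolynomial.eval (Sum.elim z.1 (Sum.elim z.2.1 z.2.2)) g)} ∨
        ∃ k : ℕ, 2 ≤ k ∧
          S = {z | ∃ w : ℚ_[p],
            w ^ k = MvPolynomial.eval (Sum.elim z.1 (Sum.elim z.2.1 z.2.2)) f}} R) :
    ∃ δ : ℝ, 0 < δ ∧
      ∀ c : Fin s → ℚ_[p],
        ∃ (A : Set (Fin n → ℤ_[p])) (B : Set (Fin m → ℤ_[p])),
          MeasurableSet A ∧ MeasurableSet B ∧
          ENNReal.ofReal δ ≤ μn A ∧ ENNReal.ofReal δ ≤ μm B ∧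
          ((∀ a ∈ A, ∀ b ∈ B,
              ((fun i => (a i : ℚ_[p])), (fun i => (b i : ℚ_[p])), c) ∈ R) ∨
           (∀ a ∈ A, ∀ b ∈ B,
              ((fun i => (a i : ℚ_[p])), (fun i => (b i : ℚ_[p])), c) ∉ R)) := by
  classical
  obtain ⟨L, K, hK2, hdet⟩ := boolcomb_data R hR
  have hfold : ∀ (L' : List (MvPolynomial (Fin n ⊕ Fin m ⊕ Fin s) ℚ_[p])), ∀ f ∈ L',
      f.totalDegree ≤ L'.foldr (fun g acc => max g.totalDegree acc) 0 := by
    intro L'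
    induction L' with
    | nil => intro f hf; simp at hf
    | cons g tl ih =>
      intro f hf
      rcases List.mem_cons.mp hf with rfl | hf
      · exact le_max_left _ _
      · exact le_trans (ih f hf) (le_max_right _ _)
  set d := L.foldr (fun g acc => max g.totalDegree acc) 0 with hd
  obtain ⟨ε, hεpos, hkey⟩ := key (p := p) (n+m) d L.length
  set θ : ℝ := ((K:ℝ)⁻¹)^2 with hθ
  have hKposR : (0:ℝ) < K := by exact_mod_cast (by omega : 0 < K)
  have hθpos : 0 < θ := by rw [hθ]; positivity
  have hθ1 : θ ≤ 1 := by
    rw [hθ]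
    have h2 : (K:ℝ)⁻¹ ≤ 1 := by
      rw [inv_le_one_iff₀]; right; exact_mod_cast (by omega : 1 ≤ K)
    calc ((K:ℝ)⁻¹)^2 ≤ 1^2 := pow_le_pow_left₀ (by positivity) h2 2
      _ = 1 := one_pow 2
  obtain ⟨Rr, hRr⟩ := PadicInt.exists_pow_neg_lt p (mul_pos hθpos hεpos)
  set ρ : ℝ := (p:ℝ)^(-(Rr:ℤ)) with hρ
  have hppos : (0:ℝ) < p := by exact_mod_cast (Fact.out : p.Prime).pos
  have hρpos : 0 < ρ := by rw [hρ]; positivity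
  refine ⟨(((p:ℝ))^(Rr*(n+m)))⁻¹, by positivity, ?_⟩
  intro c
  set P : MvPolynomial (Fin n ⊕ Fin m ⊕ Fin s) ℚ_[p] → MvPolynomial (Fin (n+m)) ℚ_[p] :=
    fun f => rename finSumFinEquiv (substC c f) with hP
  have hsubdeg : ∀ f : MvPolynomial (Fin n ⊕ Fin m ⊕ Fin s) ℚ_[p],
      (P f).totalDegree ≤ f.totalDegree := by
    intro f
    rw [hP]
    refine le_trans (totalDegree_rename_le _ _) ?_
    refine totalDegree_aeval_le _ ?_ f
    intro i
    rcases i with i | i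
    · rw [Sum.elim_inl, totalDegree_X]
    · rcases i with j | j
      · rw [Sum.elim_inr, Sum.elim_inl, totalDegree_X]
      · rw [Sum.elim_inr, Sum.elim_inr, totalDegree_C]; omega
  set F : Fin L.length → MvPolynomial (Fin (n+m)) ℚ_[p] :=
    fun j => if P (L.get j) = 0 then 1 else P (L.get j) with hF
  have hF0 : ∀ j, F j ≠ 0 := by
    intro j; rw [hF]; dsimp only; split
    · exact one_ne_zero
    · assumption
  have hFdeg : ∀ j, (F j).totalDegree ≤ d := by
    intro j; rw [hF]; dsimp only; split
    · rw [totalDegree_one]; exact Nat.zero_le _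
    · exact le_trans (hsubdeg _) (hfold L _ (List.get_mem L j))
  obtain ⟨a, ha⟩ := hkey F hF0 hFdeg
  set ax : Fin n → ℤ_[p] := fun i => a (finSumFinEquiv (Sum.inl i)) with hax
  set ay : Fin m → ℤ_[p] := fun i => a (finSumFinEquiv (Sum.inr i)) with hay
  set A : Set (Fin n → ℤ_[p]) := {x | ∀ i, ‖x i - ax i‖ ≤ (p:ℝ)^(-(Rr:ℤ))} with hA
  set B : Set (Fin m → ℤ_[p]) := {y | ∀ i, ‖y i - ay i‖ ≤ (p:ℝ)^(-(Rr:ℤ))} with hB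
  have hofReal : ENNReal.ofReal ((((p:ℝ))^(Rr*(n+m)))⁻¹) = ((p:ENNReal)^(Rr*(n+m)))⁻¹ := by
    rw [ENNReal.ofReal_inv_of_pos (by positivity), ENNReal.ofReal_pow (by positivity),
      ENNReal.ofReal_natCast]
  have hmeasA : ENNReal.ofReal ((((p:ℝ))^(Rr*(n+m)))⁻¹) ≤ μn A := by
    rw [hofReal, hA, measure_ball_eq n Rr μn ax]
    rw [ENNReal.inv_le_inv]
    refine pow_le_pow_right₀ ?_ ?_
    · exact_mod_cast Nat.one_le_iff_ne_zero.mpr (Fact.out : p.Prime).ne_zero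
    · exact Nat.mul_le_mul_left Rr (by omega)
  have hmeasB : ENNReal.ofReal ((((p:ℝ))^(Rr*(n+m)))⁻¹) ≤ μm B := by
    rw [hofReal, hB, measure_ball_eq m Rr μm ay]
    rw [ENNReal.inv_le_inv]
    refine pow_le_pow_right₀ ?_ ?_
    · exact_mod_cast Nat.one_le_iff_ne_zero.mpr (Fact.out : p.Prime).ne_zero
    · exact Nat.mul_le_mul_left Rr (by omega)
  refine ⟨A, B, ball_measurable n Rr ax, ball_measurable m Rr ay, hmeasA, hmeasB, ?_⟩
  -- evaluation bridge
  have hEV : ∀ (f : MvPolynomial (Fin n ⊕ Fin m ⊕ Fin s) ℚ_[p])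
      (x' : Fin n → ℤ_[p]) (y' : Fin m → ℤ_[p]),
      EV f ((fun i => ((x' i : ℚ_[p]))), (fun i => ((y' i : ℚ_[p]))), c)
        = eval (fun i => (((Sum.elim x' y' (finSumFinEquiv.symm i) : ℤ_[p]) : ℚ_[p]))) (P f) := by
    intro f x' y'
    rw [hP]
    dsimp only
    rw [eval_rename]
    have hcomp : ((fun i => (((Sum.elim x' y' (finSumFinEquiv.symm i) : ℤ_[p]) : ℚ_[p])))
        ∘ finSumFinEquiv)
        = Sum.elim (fun i => ((x' i : ℚ_[p]))) (fun i => ((y' i : ℚ_[p]))) := by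
      funext u
      rcases u with u | u <;> simp
    rw [hcomp, eval_substC]
    rfl
  have haelim : (fun i => (((Sum.elim ax ay (finSumFinEquiv.symm i) : ℤ_[p]) : ℚ_[p])))
      = (fun i => ((a i : ℚ_[p]))) := by
    funext i
    have : Sum.elim ax ay (finSumFinEquiv.symm i) = a i := by
      rcases h : finSumFinEquiv.symm i with u | u
      · have hi : i = finSumFinEquiv (Sum.inl u) := by rw [← h, Equiv.apply_symm_apply]
        rw [hi, Sum.elim_inl, hax]
      · have hi : i = finSumFinEquiv (Sum.inr u) := by rw [← h, Equiv.apply_symm_apply]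
        rw [hi, Sum.elim_inr, hay]
    rw [this]
  have hmain : ∀ x ∈ A, ∀ y ∈ B, ∀ f ∈ L,
      (Padic.addValuation (EV f ((fun i => ((x i : ℚ_[p]))), (fun i => ((y i : ℚ_[p]))), c))
        = Padic.addValuation
            (EV f ((fun i => ((ax i : ℚ_[p]))), (fun i => ((ay i : ℚ_[p]))), c)))
      ∧ ((EV f ((fun i => ((x i : ℚ_[p]))), (fun i => ((y i : ℚ_[p]))), c) = 0)
          ↔ (EV f ((fun i => ((ax i : ℚ_[p]))), (fun i => ((ay i : ℚ_[p]))), c) = 0))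
      ∧ (∀ k : ℕ, 2 ≤ k → k ≤ K →
          ((∃ w : ℚ_[p], w ^ k = EV f ((fun i => ((x i : ℚ_[p]))),
              (fun i => ((y i : ℚ_[p]))), c))
            ↔ (∃ w : ℚ_[p], w ^ k = EV f ((fun i => ((ax i : ℚ_[p]))),
              (fun i => ((ay i : ℚ_[p]))), c)))) := by
    intro x hx y hy f hf
    obtain ⟨j, hj⟩ := List.mem_iff_get.mp hf
    set w : Fin (n+m) → ℤ_[p] := fun i => Sum.elim x y (finSumFinEquiv.symm i) with hw
    have hdist : ∀ i, ‖(w i : ℚ_[p]) - ((a i : ℚ_[p]))‖ ≤ ρ := by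
      intro i
      have e1 : ((w i : ℚ_[p])) - ((a i : ℚ_[p])) = (((w i - a i : ℤ_[p]) : ℚ_[p])) := by
        rw [PadicInt.coe_sub]
      rw [e1, ← PadicInt.norm_def]
      rcases h : finSumFinEquiv.symm i with u | u
      · have hi : i = finSumFinEquiv (Sum.inl u) := by rw [← h, Equiv.apply_symm_apply]
        have ew : w i = x u := by rw [hw]; dsimp only; rw [h, Sum.elim_inl]
        have ea : a i = ax u := by rw [hi, hax]
        rw [ew, ea]
        exact hx u
      · have hi : i = finSumFinEquiv (Sum.inr u) := by rw [← h, Equiv.apply_symm_apply]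
        have ew : w i = y u := by rw [hw]; dsimp only; rw [h, Sum.elim_inr]
        have ea : a i = ay u := by rw [hi, hay]
        rw [ew, ea]
        exact hy u
    have hEVx : EV f ((fun i => ((x i : ℚ_[p]))), (fun i => ((y i : ℚ_[p]))), c)
        = eval (fun i => ((w i : ℚ_[p]))) (P f) := hEV f x y
    have hEVa : EV f ((fun i => ((ax i : ℚ_[p]))), (fun i => ((ay i : ℚ_[p]))), c)
        = eval (fun i => ((a i : ℚ_[p]))) (P f) := by
      rw [hEV f ax ay, haelim]
    by_cases h0 : P f = 0
    · have hz1 : EV f ((fun i => ((x i : ℚ_[p]))), (fun i => ((y i : ℚ_[p]))), c) = 0 := by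
        rw [hEVx, h0, map_zero]
      have hz2 : EV f ((fun i => ((ax i : ℚ_[p]))), (fun i => ((ay i : ℚ_[p]))), c) = 0 := by
        rw [hEVa, h0, map_zero]
      exact ⟨by rw [hz1, hz2], by rw [hz1, hz2], fun k _ _ => by rw [hz1, hz2]⟩
    · have hFj : F j = P f := by
        rw [hF]; dsimp only; rw [hj, if_neg h0]
      set Y := eval (fun i => ((a i : ℚ_[p]))) (P f) with hY
      have hYpos : 0 < ‖Y‖ := by
        obtain ⟨mm, hmm⟩ : ∃ mm, coeff mm (P f) ≠ 0 := by
          by_contra hall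
          push_neg at hall
          exact h0 (MvPolynomial.ext _ _ fun mm => by rw [hall mm, coeff_zero])
        have hb := ha j mm
        rw [hFj] at hb
        exact lt_of_lt_of_le (mul_pos hεpos (norm_pos_iff.mpr hmm)) hb
      have hY0 : Y ≠ 0 := norm_pos_iff.mp hYpos
      have hcoef : ∀ mm, ‖coeff mm (P f)‖ ≤ ‖Y‖ / ε := by
        intro mm
        have hb := ha j mm
        rw [hFj] at hb
        rw [le_div_iff₀ hεpos, mul_comm]
        exact hb
      set X := eval (fun i => ((w i : ℚ_[p]))) (P f) with hX
      have hXY : ‖X - Y‖ < θ * ‖Y‖ := by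
        have hlip := eval_sub_eval_norm_le (P f) (‖Y‖/ε) ρ hcoef hρpos.le
          (fun i => ((w i : ℚ_[p]))) (fun i => ((a i : ℚ_[p])))
          (fun i => (w i).2) (fun i => (a i).2) hdist
        refine lt_of_le_of_lt hlip ?_
        calc (‖Y‖/ε) * ρ < (‖Y‖/ε) * (θ * ε) :=
              mul_lt_mul_of_pos_left hRr (by positivity)
          _ = θ * ‖Y‖ := by field_simp
      have hnormeq : ‖X‖ = ‖Y‖ := by
        refine norm_eq_of_sub_lt (lt_of_lt_of_le hXY ?_)
        nlinarith
      have hX0 : X ≠ 0 := by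
        rw [← norm_pos_iff, hnormeq]; exact hYpos
      rw [hEVx, hEVa]
      refine ⟨addValuation_eq_of_norm_eq hX0 hY0 hnormeq, iff_of_false hX0 hY0, ?_⟩
      intro k hk hkK
      refine pow_iff_of_close k K hk hkK hY0 ?_
      rw [← hθ]
      exact hXY
  have hconst : ∀ x ∈ A, ∀ y ∈ B,
      (((fun i => ((x i : ℚ_[p]))), (fun i => ((y i : ℚ_[p]))), c) ∈ R ↔
       ((fun i => ((ax i : ℚ_[p]))), (fun i => ((ay i : ℚ_[p]))), c) ∈ R) := by
    intro x hx y hy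
    refine hdet _ _ ?_ ?_ ?_
    · intro f hf; exact (hmain x hx y hy f hf).2.1
    · intro f hf g hg
      rw [(hmain x hx y hy f hf).1, (hmain x hx y hy g hg).1]
    · intro f hf k hk hkK; exact (hmain x hx y hy f hf).2.2 k hk hkK
  by_cases hcase : ((fun i => ((ax i : ℚ_[p]))), (fun i => ((ay i : ℚ_[p]))), c) ∈ R
  · left; intro x hx y hy; exact (hconst x hx y hy).mpr hcase
  · right; intro x hx y hy hmem; exact hcase ((hconst x hx y hy).mp hmem)
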